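/- arXiv:2511.15374 — 2 statements merged into one kernel-verified Lean document; each statement's English description precedes it below -/
import Mathlib

section
/- Let $\{f_k\}$ and $\{\alpha_k\}$ be nonnegative sequences of random variables adapted to a filtration $\{\mathscr{F}_k\}$. If $E[f_{k+1}\mid\mathscr{F}_k] \le f_k + \alpha_k$ almost surely for all $k \ge 1$, and $\sum_{i=1}^\infty \alpha_i < \infty$ almost surely, then $f_k$ converges almost surely to a finite limit. -/
open MeasureTheory Filter

/-- Nonnegative almost-supermartingale convergence theorem (no multiplicative
perturbation): if `E[f (k+1) | ℱ k] ≤ f k + a k` a.s. for all `k ≥ 1` and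
`∑ a i < ∞` a.s., then `f k` converges a.s. to a finite limit. -/
theorem stmt0 {Ω : Type*} {m0 : MeasurableSpace Ω} {μ : Measure Ω} [IsProbabilityMeasure μ]
    (ℱ : Filtration ℕ m0) (f a : ℕ → Ω → ℝ)
    (hf_nonneg : ∀ k ω, 0 ≤ f k ω) (ha_nonneg : ∀ k ω, 0 ≤ a k ω)
    (hf_adapted : Adapted ℱ f) (ha_adapted : Adapted ℱ a)
    (hf_int : ∀ k, Integrable (f k) μ) (ha_int : ∀ k, Integrable (a k) μ)
    (hle : ∀ k, 1 ≤ k → μ[f (k + 1) | ℱ k] ≤ᵐ[μ] f k + a k)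
    (hsum : ∀ᵐ ω ∂μ, Summable fun i => a i ω) :
    ∀ᵐ ω ∂μ, ∃ l : ℝ, Tendsto (fun k => f k ω) atTop (nhds l) := by
  classical
  set 𝒢 : Filtration ℕ m0 := ⟨fun n => ℱ (n + 1), fun i j h => ℱ.mono (Nat.add_le_add_right h 1),
    fun n => ℱ.le _⟩ with h𝒢
  have h𝒢n : ∀ n, 𝒢 n = ℱ (n + 1) := fun n => rfl
  -- increments
  set D : ℕ → Ω → ℝ := fun n ω => f (n + 2) ω - (f (n + 1) ω + a (n + 1) ω) with hD
  have hD_int : ∀ n, Integrable (D n) μ := fun n =>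
    (hf_int (n + 2)).sub ((hf_int (n + 1)).add (ha_int (n + 1)))
  have hD_meas : ∀ n, StronglyMeasurable[𝒢 (n + 1)] (D n) := fun n =>
    (hf_adapted (n + 2)).stronglyMeasurable.sub
      (((hf_adapted (n + 1)).stronglyMeasurable.mono (ℱ.mono (Nat.le_succ _))).add
        ((ha_adapted (n + 1)).stronglyMeasurable.mono (ℱ.mono (Nat.le_succ _))))
  have hDcond : ∀ n, μ[D n | 𝒢 n] ≤ᵐ[μ] 0 := by
    intro n
    have h1 : μ[D n | 𝒢 n] =ᵐ[μ] μ[f (n + 2) | 𝒢 n] - (f (n + 1) + a (n + 1)) := by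
      refine (condExp_sub (hf_int (n + 2)) ((hf_int (n + 1)).add (ha_int (n + 1))) (𝒢 n)).trans ?_
      have := condExp_of_stronglyMeasurable (𝒢.le n)
        (((hf_adapted (n + 1)).stronglyMeasurable.add (ha_adapted (n + 1)).stronglyMeasurable) :
          StronglyMeasurable[𝒢 n] (f (n + 1) + a (n + 1)))
        ((hf_int (n + 1)).add (ha_int (n + 1)))
      rw [this]
    have h2 := hle (n + 1) (Nat.succ_le_succ (Nat.zero_le n))
    filter_upwards [h1, h2] with ω hω1 hω2
    have : (μ[f (n + 2) | 𝒢 n]) ω ≤ (f (n + 1) + a (n + 1)) ω := hω2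
    simpa [hω1, sub_nonpos] using this
  -- stopping sets
  set s : ℕ → ℕ → Set Ω := fun c n => {ω | ∑ i ∈ Finset.Icc 1 (n + 1), a i ω ≤ (c : ℝ)}
    with hs
  have hs_meas : ∀ c n, MeasurableSet[𝒢 n] (s c n) := by
    intro c n
    have hsum_meas : StronglyMeasurable[ℱ (n + 1)] (fun ω => ∑ i ∈ Finset.Icc 1 (n + 1), a i ω) :=
      Finset.stronglyMeasurable_fun_sum _ fun i hi =>
        (ha_adapted i).stronglyMeasurable.mono (ℱ.mono (Finset.mem_Icc.1 hi).2)
    rw [h𝒢n]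
    exact measurableSet_le hsum_meas.measurable measurable_const
  -- the stopped process
  set H : ℕ → ℕ → Ω → ℝ := fun c n => Nat.rec (motive := fun _ => Ω → ℝ) (f 1)
    (fun m Hm => fun ω => Hm ω + Set.indicator (s c m) (D m) ω) n with hH
  have hH0 : ∀ c, H c 0 = f 1 := fun c => rfl
  have hHsucc : ∀ c n, H c (n + 1) = fun ω => H c n ω + Set.indicator (s c n) (D n) ω :=
    fun c n => rfl
  -- H agrees with the compensated process while the sums stay below c
  have hHeq : ∀ (c : ℕ) n ω, (∑ i ∈ Finset.Icc 1 (n + 1), a i ω ≤ (c : ℝ)) →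
      H c n ω = f (n + 1) ω - ∑ i ∈ Finset.Icc 1 n, a i ω := by
    intro c n
    induction n with
    | zero => intro ω _; simp [hH0]
    | succ n ih =>
      intro ω hω
      have hmono : ∑ i ∈ Finset.Icc 1 (n + 1), a i ω ≤ ∑ i ∈ Finset.Icc 1 (n + 2), a i ω :=
        Finset.sum_le_sum_of_subset_of_nonneg
          (Finset.Icc_subset_Icc_right (by omega)) (fun i _ _ => ha_nonneg i ω)
      have hmem : ω ∈ s c n := le_trans hmono hω
      rw [hHsucc]
      simp only [Set.indicator_of_mem hmem, ih ω (le_trans hmono hω), hD]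
      have hsumsucc : ∑ i ∈ Finset.Icc 1 (n + 1), a i ω
          = (∑ i ∈ Finset.Icc 1 n, a i ω) + a (n + 1) ω :=
        Finset.sum_Icc_succ_top (by omega) _
      rw [hsumsucc]
      ring
  -- lower bound
  have hHlb : ∀ (c : ℕ) n ω, -(c : ℝ) ≤ H c n ω := by
    intro c n
    induction n with
    | zero =>
      intro ω
      rw [hH0]
      exact le_trans (neg_nonpos.2 (Nat.cast_nonneg c)) (hf_nonneg 1 ω)
    | succ n ih =>
      intro ω
      rw [hHsucc]
      show -(c : ℝ) ≤ H c n ω + Set.indicator (s c n) (D n) ω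
      by_cases hmem : ω ∈ s c n
      · have heq := hHeq c n ω hmem
        rw [Set.indicator_of_mem hmem]
        have : H c n ω + D n ω = f (n + 2) ω - ∑ i ∈ Finset.Icc 1 (n + 1), a i ω := by
          rw [heq, hD]
          have hsumsucc : ∑ i ∈ Finset.Icc 1 (n + 1), a i ω
              = (∑ i ∈ Finset.Icc 1 n, a i ω) + a (n + 1) ω :=
            Finset.sum_Icc_succ_top (by omega) _
          rw [hsumsucc]; ring
        rw [this]
        have : (∑ i ∈ Finset.Icc 1 (n + 1), a i ω) ≤ (c : ℝ) := hmem
        have h2 := hf_nonneg (n + 2) ω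
        linarith
      · rw [Set.indicator_of_notMem hmem, add_zero]
        exact ih ω
  -- measurability and integrability
  have hHmeas : ∀ c n, StronglyMeasurable[𝒢 n] (H c n) := by
    intro c n
    induction n with
    | zero => rw [hH0]; exact (hf_adapted 1).stronglyMeasurable
    | succ n ih =>
      rw [hHsucc]
      exact (ih.mono (𝒢.mono (Nat.le_succ _))).add
        ((hD_meas n).indicator (𝒢.mono (Nat.le_succ n) _ (hs_meas c n)))
  have hH_int : ∀ c n, Integrable (H c n) μ := by
    intro c n
    induction n with
    | zero => rw [hH0]; exact hf_int 1
    | succ n ih =>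
      rw [hHsucc]
      exact ih.add ((hD_int n).indicator (𝒢.le n _ (hs_meas c n)))
  -- supermartingale property
  have hsuper : ∀ c : ℕ, Supermartingale (H c) 𝒢 μ := by
    intro c
    refine supermartingale_nat (fun n => hHmeas c n) (fun n => hH_int c n) (fun n => ?_)
    have h1 : μ[H c (n + 1) | 𝒢 n]
        =ᵐ[μ] μ[H c n | 𝒢 n] + μ[Set.indicator (s c n) (D n) | 𝒢 n] := by
      rw [hHsucc]
      exact condExp_add (hH_int c n) ((hD_int n).indicator (𝒢.le n _ (hs_meas c n))) (𝒢 n)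
    have h2 : μ[H c n | 𝒢 n] = H c n :=
      condExp_of_stronglyMeasurable (𝒢.le n) (hHmeas c n) (hH_int c n)
    have h3 : μ[Set.indicator (s c n) (D n) | 𝒢 n]
        =ᵐ[μ] Set.indicator (s c n) (μ[D n | 𝒢 n]) :=
      condExp_indicator (hD_int n) (hs_meas c n)
    filter_upwards [h1, h3, hDcond n] with ω hω1 hω3 hωD
    rw [hω1]
    simp only [Pi.add_apply, h2, hω3]
    have : Set.indicator (s c n) (μ[D n | 𝒢 n]) ω ≤ 0 := by
      by_cases hmem : ω ∈ s c n
      · rw [Set.indicator_of_mem hmem]; exact hωD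
      · rw [Set.indicator_of_notMem hmem]
    linarith
  -- expectation bound
  have hEH : ∀ c n, ∫ ω, H c n ω ∂μ ≤ ∫ ω, f 1 ω ∂μ := by
    intro c n
    have h1 : ∫ ω, H c n ω ∂μ = ∫ ω, (μ[H c n | 𝒢 0]) ω ∂μ :=
      (integral_condExp (𝒢.le 0)).symm
    rw [h1, ← hH0 c]
    exact integral_mono_ae integrable_condExp (hH_int c 0) ((hsuper c).2.1 0 n (Nat.zero_le n))
  -- L¹ bound
  have hbdd : ∀ c : ℕ, ∀ n, eLpNorm (H c n) 1 μ ≤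
      ENNReal.ofReal (∫ ω, f 1 ω ∂μ + 2 * c) := by
    intro c n
    have habs : ∀ ω, |H c n ω| ≤ H c n ω + 2 * c := by
      intro ω
      have := hHlb c n ω
      have hc0 : (0 : ℝ) ≤ (c : ℝ) := Nat.cast_nonneg c
      rcases abs_cases (H c n ω) with ⟨h, _⟩ | ⟨h, _⟩ <;> rw [h] <;> linarith
    calc eLpNorm (H c n) 1 μ = ∫⁻ ω, ENNReal.ofReal |H c n ω| ∂μ := by
          rw [eLpNorm_one_eq_lintegral_enorm]
          congr 1; funext ω
          rw [← ofReal_norm_eq_enorm, Real.norm_eq_abs]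
      _ ≤ ∫⁻ ω, ENNReal.ofReal (H c n ω + 2 * c) ∂μ :=
          lintegral_mono fun ω => ENNReal.ofReal_le_ofReal (habs ω)
      _ = ENNReal.ofReal (∫ ω, (H c n ω + 2 * c) ∂μ) :=
          (ofReal_integral_eq_lintegral_ofReal ((hH_int c n).add (integrable_const _))
            (Filter.Eventually.of_forall fun ω => by
              have h1 := hHlb c n ω
              have hc0 : (0 : ℝ) ≤ (c : ℝ) := Nat.cast_nonneg c
              simp only [Pi.zero_apply, Pi.add_apply]
              linarith)).symm
      _ ≤ ENNReal.ofReal (∫ ω, f 1 ω ∂μ + 2 * c) := by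
          apply ENNReal.ofReal_le_ofReal
          rw [integral_add (hH_int c n) (integrable_const _), integral_const]
          simp only [measure_univ, probReal_univ, ENNReal.toReal_one, smul_eq_mul, one_mul]
          linarith [hEH c n]
  -- convergence of the stopped processes
  have hconv : ∀ c : ℕ, ∀ᵐ ω ∂μ, ∃ l : ℝ, Tendsto (fun n => H c n ω) atTop (nhds l) := by
    intro c
    have hsub : Submartingale (fun n => -(H c n)) 𝒢 μ := (hsuper c).neg
    have hbdd' : ∀ n, eLpNorm (-(H c n)) 1 μ ≤
        (∫ ω, f 1 ω ∂μ + 2 * c).toNNReal := by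
      intro n
      rw [eLpNorm_neg]
      exact le_trans (hbdd c n) (le_of_eq rfl)
    filter_upwards [hsub.ae_tendsto_limitProcess hbdd'] with ω hω
    exact ⟨-(𝒢.limitProcess (fun n => -(H c n)) μ ω), by
      have := hω.neg
      simpa using this⟩
  have hall : ∀ᵐ ω ∂μ, ∀ c : ℕ, ∃ l : ℝ, Tendsto (fun n => H c n ω) atTop (nhds l) :=
    ae_all_iff.2 hconv
  -- assembly
  filter_upwards [hall, hsum] with ω hω hsummable
  obtain ⟨c, hc⟩ := exists_nat_ge (∑' i, a i ω)
  have hkey : ∀ n, H c n ω = f (n + 1) ω - ∑ i ∈ Finset.Icc 1 n, a i ω := by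
    intro n
    refine hHeq c n ω (le_trans ?_ hc)
    exact Summable.sum_le_tsum _ (fun i _ => ha_nonneg i ω) hsummable
  obtain ⟨l, hl⟩ := hω c
  -- convergence of partial sums over Icc 1 n
  have hsum' : Summable (fun i => a (i + 1) ω) := (summable_nat_add_iff 1).2 hsummable
  have hps : Tendsto (fun n => ∑ i ∈ Finset.Icc 1 n, a i ω) atTop
      (nhds (∑' i, a (i + 1) ω)) := by
    have h1 := hsum'.hasSum.tendsto_sum_nat
    refine h1.congr fun n => ?_
    rw [← Finset.Ico_add_one_right_eq_Icc, Finset.sum_Ico_eq_sum_range]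
    simp [add_comm]
  have hf1 : Tendsto (fun n => f (n + 1) ω) atTop (nhds (l + ∑' i, a (i + 1) ω)) := by
    have := hl.add hps
    refine this.congr fun n => ?_
    rw [hkey n]; ring
  exact ⟨l + ∑' i, a (i + 1) ω, (tendsto_add_atTop_iff_nat 1).1 hf1⟩
end

section
/- Suppose $w$ has a distribution admitting a continuous, everywhere positive density $f$ on $\mathbb{R}$ (e.g. $w \sim N(0, \sigma^2)$ with $\sigma > 0$), and let $S(x) = \max(L, \min(x, N))$ with $L < N$, $G(x) = E[S(x+w)]$. Then $G$ is continuously differentiable with $G'(x) = P(L - x \le w \le N - x) = F(N-x) - F(L-x) > 0$ for every $x$, where $F$ is the CDF of $w$; moreover for any constant $C>0$, $\inf_{|x| \le C} G'(x) > 0$ and $\sup_{|x|\le C} G'(x) \le 1$. -/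
open MeasureTheory

/-- Pointwise derivative of the clamp function. -/
lemma clamp_hasDerivAt (L N : ℝ) (hLN : L < N) (c x₀ : ℝ)
    (h1 : x₀ + c ≠ L) (h2 : x₀ + c ≠ N) :
    HasDerivAt (fun x => max L (min (x + c) N))
      (Set.indicator (Set.Ioo L N) (fun _ => (1:ℝ)) (x₀ + c)) x₀ := by
  rcases lt_trichotomy (x₀ + c) L with h | h | h
  · have hind : Set.indicator (Set.Ioo L N) (fun _ => (1:ℝ)) (x₀ + c) = 0 :=
      Set.indicator_of_notMem (fun hm => absurd hm.1 (not_lt.2 h.le)) _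
    rw [hind]
    have hev : (fun x => max L (min (x + c) N)) =ᶠ[nhds x₀] fun _ => L := by
      have hopen : IsOpen {x : ℝ | x + c < L} :=
        isOpen_lt (continuous_id.add continuous_const) continuous_const
      filter_upwards [hopen.mem_nhds h] with x hx
      have hx' : x + c < L := hx
      rw [min_eq_left (by linarith), max_eq_left (by linarith)]
    exact (hasDerivAt_const x₀ L).congr_of_eventuallyEq hev
  · exact absurd h h1
  · rcases lt_trichotomy (x₀ + c) N with h' | h' | h'
    · have hind : Set.indicator (Set.Ioo L N) (fun _ => (1:ℝ)) (x₀ + c) = 1 :=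
        Set.indicator_of_mem (Set.mem_Ioo.mpr ⟨h, h'⟩) _
      rw [hind]
      have hev : (fun x => max L (min (x + c) N)) =ᶠ[nhds x₀] fun x => x + c := by
        have hopen : IsOpen {x : ℝ | L < x + c ∧ x + c < N} :=
          (isOpen_lt continuous_const (continuous_id.add continuous_const)).inter
            (isOpen_lt (continuous_id.add continuous_const) continuous_const)
        filter_upwards [hopen.mem_nhds ⟨h, h'⟩] with x hx
        rw [min_eq_left hx.2.le, max_eq_right hx.1.le]
      exact ((hasDerivAt_id x₀).add_const c).congr_of_eventuallyEq hev
    · exact absurd h' h2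
    · have hind : Set.indicator (Set.Ioo L N) (fun _ => (1:ℝ)) (x₀ + c) = 0 :=
        Set.indicator_of_notMem (fun hm => absurd hm.2 (not_lt.2 h'.le)) _
      rw [hind]
      have hev : (fun x => max L (min (x + c) N)) =ᶠ[nhds x₀] fun _ => N := by
        have hopen : IsOpen {x : ℝ | N < x + c} :=
          isOpen_lt continuous_const (continuous_id.add continuous_const)
        filter_upwards [hopen.mem_nhds h'] with x hx
        have hx' : N < x + c := hx
        rw [min_eq_right (by linarith), max_eq_right (by linarith)]
      exact (hasDerivAt_const x₀ N).congr_of_eventuallyEq hev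

/-- If `w` has a continuous, everywhere positive density `f` on `ℝ`, and
`S x = max L (min x N)`, `G x = E[S (x+w)]`, `F` the CDF of `w`, then `G` is
differentiable with `G'(x) = F (N - x) - F (L - x) > 0`, `G'` is continuous,
and for every `C > 0`, `inf_{|x| ≤ C} G'(x) > 0` and `sup_{|x| ≤ C} G'(x) ≤ 1`. -/
theorem stmt7 {Ω : Type*} {m0 : MeasurableSpace Ω} {μ : Measure Ω} [IsProbabilityMeasure μ]
    (w : Ω → ℝ) (hw : Measurable w) (f : ℝ → ℝ)
    (hf_cont : Continuous f) (hf_pos : ∀ x, 0 < f x)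
    (hdensity : Measure.map w μ
      = MeasureTheory.volume.withDensity fun x => ENNReal.ofReal (f x))
    (L N : ℝ) (hLN : L < N) (S G F : ℝ → ℝ)
    (hS : ∀ x, S x = max L (min x N))
    (hG : ∀ x, G x = ∫ ω, S (x + w ω) ∂μ)
    (hF : ∀ x, F x = (μ {ω | w ω ≤ x}).toReal) :
    (∀ x, HasDerivAt G (F (N - x) - F (L - x)) x) ∧
    Continuous (deriv G) ∧
    (∀ x, 0 < F (N - x) - F (L - x)) ∧
    (∀ C : ℝ, 0 < C →
      (∃ c > 0, ∀ x, |x| ≤ C → c ≤ deriv G x) ∧ ∀ x, |x| ≤ C → deriv G x ≤ 1) := by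
  have hSfun : S = fun y => max L (min y N) := funext hS
  -- f is integrable with lintegral computations
  have hmap_set : ∀ s : Set ℝ, MeasurableSet s →
      μ (w ⁻¹' s) = ∫⁻ t in s, ENNReal.ofReal (f t) := by
    intro s hs
    rw [← Measure.map_apply hw hs, hdensity, withDensity_apply _ hs]
  have hf_int : Integrable f := by
    refine ⟨hf_cont.aestronglyMeasurable, ?_⟩
    rw [HasFiniteIntegral]
    have : ∀ t, ‖f t‖ₑ = ENNReal.ofReal (f t) := fun t =>
      Real.enorm_eq_ofReal (hf_pos t).le
    simp_rw [this]
    have h0 := hmap_set Set.univ MeasurableSet.univ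
    rw [Measure.restrict_univ] at h0
    rw [← h0]
    exact measure_lt_top μ _
  -- F as a primitive of f
  have hFeq : ∀ x, F x = ∫ t in Set.Iic x, f t := by
    intro x
    rw [hF]
    have h1 : {ω | w ω ≤ x} = w ⁻¹' Set.Iic x := rfl
    rw [h1, hmap_set _ measurableSet_Iic,
      integral_eq_lintegral_of_nonneg_ae (Filter.Eventually.of_forall fun t => (hf_pos t).le)
        hf_cont.aestronglyMeasurable.restrict]
  have hFsub : ∀ a b : ℝ, F b - F a = ∫ t in a..b, f t := by
    intro a b
    rw [hFeq, hFeq]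
    exact intervalIntegral.integral_Iic_sub_Iic hf_int.integrableOn hf_int.integrableOn
  -- no atoms
  have hatom : ∀ c : ℝ, μ {ω | w ω = c} = 0 := by
    intro c
    have : {ω | w ω = c} = w ⁻¹' {c} := rfl
    rw [this, hmap_set _ (measurableSet_singleton c)]
    rw [show (volume.restrict {c} : Measure ℝ) = 0 by
      simp [Measure.restrict_eq_zero]]
    simp
  -- the main derivative
  have hG' : ∀ x₀ : ℝ, HasDerivAt G (F (N - x₀) - F (L - x₀)) x₀ := by
    intro x₀
    set F' : Ω → ℝ := fun ω => Set.indicator (Set.Ioo L N) (fun _ => (1:ℝ)) (x₀ + w ω) with hF'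
    have hF'_meas : AEStronglyMeasurable F' μ := by
      apply Measurable.aestronglyMeasurable
      exact (measurable_const.indicator measurableSet_Ioo).comp (measurable_const.add hw)
    have hS_cont : Continuous S := by
      rw [hSfun]
      exact continuous_const.max (continuous_id.min continuous_const)
    have hF_meas : ∀ᶠ x in nhds x₀, AEStronglyMeasurable (fun ω => S (x + w ω)) μ :=
      Filter.Eventually.of_forall fun x =>
        (hS_cont.measurable.comp (measurable_const.add hw)).aestronglyMeasurable
    have hSbound : ∀ y, ‖S y‖ ≤ |L| + |N| := by
      intro y
      rw [hSfun, Real.norm_eq_abs, abs_le]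
      constructor
      · have := le_max_left L (min y N)
        have := neg_abs_le L
        have := abs_nonneg N
        linarith
      · have h1 : max L (min y N) ≤ max L N :=
          max_le_max le_rfl (min_le_right _ _)
        have := le_abs_self L
        have := le_abs_self N
        have := abs_nonneg L
        have := abs_nonneg N
        rcases max_cases L N with ⟨h, _⟩ | ⟨h, _⟩ <;> linarith
    have hF_int : Integrable (fun ω => S (x₀ + w ω)) μ := by
      refine Integrable.mono' (integrable_const (|L| + |N|))
        ((hS_cont.measurable.comp (measurable_const.add hw)).aestronglyMeasurable)
        (Filter.Eventually.of_forall fun ω => hSbound _)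
    have hS_lip : LipschitzWith 1 S := by
      rw [hSfun]
      apply LipschitzWith.of_dist_le_mul
      intro a b
      rw [Real.dist_eq, Real.dist_eq, NNReal.coe_one, one_mul]
      calc |max L (min a N) - max L (min b N)|
          = |max (min a N) L - max (min b N) L| := by rw [max_comm L, max_comm L]
        _ ≤ |min a N - min b N| := abs_max_sub_max_le_abs _ _ _
        _ = |min a N - min b N| := rfl
        _ ≤ max |a - b| |N - N| := abs_min_sub_min_le_max _ _ _ _
        _ ≤ |a - b| := by simp
    have h_lip : ∀ᵐ ω ∂μ, LipschitzOnWith (Real.nnabs ((fun _ : Ω => (1:ℝ)) ω))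
        (fun x => S (x + w ω)) (Metric.ball x₀ 1) := by
      refine Filter.Eventually.of_forall fun ω => ?_
      have : LipschitzWith 1 (fun x : ℝ => S (x + w ω)) := by
        apply LipschitzWith.of_dist_le_mul
        intro a b
        have h := hS_lip.dist_le_mul (a + w ω) (b + w ω)
        simpa [Real.dist_eq, add_sub_add_right_eq_sub] using h
      have h11 : Real.nnabs (1 : ℝ) = 1 := by
        simp
      rw [h11]
      exact this.lipschitzOnWith
    have h_diff : ∀ᵐ ω ∂μ, HasDerivAt (fun x => S (x + w ω)) (F' ω) x₀ := by
      have hA : ∀ᵐ ω ∂μ, w ω ≠ L - x₀ := by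
        rw [Filter.eventually_iff, ← compl_compl {ω | w ω ≠ L - x₀}]
        apply measure_eq_zero_iff_ae_notMem.mp ?_ |>.mono ?_
        · exact {ω | w ω = L - x₀}
        · simpa using hatom (L - x₀)
        · intro ω h; simpa using h
      have hB : ∀ᵐ ω ∂μ, w ω ≠ N - x₀ := by
        rw [Filter.eventually_iff, ← compl_compl {ω | w ω ≠ N - x₀}]
        apply measure_eq_zero_iff_ae_notMem.mp ?_ |>.mono ?_
        · exact {ω | w ω = N - x₀}
        · simpa using hatom (N - x₀)
        · intro ω h; simpa using h
      filter_upwards [hA, hB] with ω h1 h2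
      rw [hSfun]
      exact clamp_hasDerivAt L N hLN (w ω) x₀
        (fun h => h1 (by linarith)) (fun h => h2 (by linarith))
    obtain ⟨-, hderiv⟩ := hasDerivAt_integral_of_dominated_loc_of_lip (Metric.ball_mem_nhds x₀ one_pos) hF_meas hF_int
      hF'_meas h_lip (integrable_const 1) h_diff
    -- compute the integral of F'
    have hint : ∫ ω, F' ω ∂μ = F (N - x₀) - F (L - x₀) := by
      have hcomp : F' = Set.indicator (w ⁻¹' Set.Ioo (L - x₀) (N - x₀)) (fun _ => (1:ℝ)) := by
        funext ω
        simp only [hF', Set.indicator_apply, Set.mem_preimage, Set.mem_Ioo]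
        have hiff : (L < x₀ + w ω ∧ x₀ + w ω < N) ↔ (L - x₀ < w ω ∧ w ω < N - x₀) := by
          constructor <;> (intro h; exact ⟨by linarith [h.1], by linarith [h.2]⟩)
        classical
        exact if_congr hiff rfl rfl
      rw [hcomp, integral_indicator_const (1:ℝ) (hw measurableSet_Ioo), smul_eq_mul, mul_one]
      have h1 : μ (w ⁻¹' Set.Ioo (L - x₀) (N - x₀))
          = ∫⁻ t in Set.Ioo (L - x₀) (N - x₀), ENNReal.ofReal (f t) :=
        hmap_set _ measurableSet_Ioo
      have h2 : (μ (w ⁻¹' Set.Ioo (L - x₀) (N - x₀))).toReal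
          = ∫ t in Set.Ioo (L - x₀) (N - x₀), f t := by
        rw [h1, integral_eq_lintegral_of_nonneg_ae
          (Filter.Eventually.of_forall fun t => (hf_pos t).le)
          hf_cont.aestronglyMeasurable.restrict]
      rw [measureReal_def, h2, ← integral_Ioc_eq_integral_Ioo, hFsub,
        intervalIntegral.integral_of_le (by linarith)]
    rw [← hint]
    have hGfun : G = fun x => ∫ ω, S (x + w ω) ∂μ := funext hG
    rw [hGfun]
    exact hderiv
  -- continuity of F
  have hF_cont : Continuous F := by
    have : F = fun x => F 0 + ∫ t in (0:ℝ)..x, f t := by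
      funext x
      have := hFsub 0 x
      linarith
    rw [this]
    exact continuous_const.add (intervalIntegral.continuous_primitive
      (fun a b => hf_int.intervalIntegrable) 0)
  have hderivG : deriv G = fun x => F (N - x) - F (L - x) := by
    funext x
    exact (hG' x).deriv
  have hcontD : Continuous (deriv G) := by
    rw [hderivG]
    exact (hF_cont.comp (continuous_const.sub continuous_id)).sub
      (hF_cont.comp (continuous_const.sub continuous_id))
  have hpos : ∀ x, 0 < F (N - x) - F (L - x) := by
    intro x
    rw [hFsub]
    exact intervalIntegral.intervalIntegral_pos_of_pos hf_int.intervalIntegrable hf_pos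
      (by linarith)
  refine ⟨hG', hcontD, hpos, ?_⟩
  intro C hC
  constructor
  · obtain ⟨x₀, hx₀mem, hx₀min⟩ := isCompact_Icc.exists_isMinOn
      (Set.nonempty_Icc.2 (by linarith : -C ≤ C)) (hcontD.continuousOn (s := Set.Icc (-C) C))
    refine ⟨deriv G x₀, ?_, ?_⟩
    · rw [hderivG]; exact hpos x₀
    · intro x hx
      exact hx₀min (Set.mem_Icc.2 (abs_le.mp hx))
  · intro x hx
    rw [hderivG]
    show F (N - x) - F (L - x) ≤ 1
    have h1 : F (N - x) ≤ 1 := by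
      rw [hF]
      have : μ {ω | w ω ≤ N - x} ≤ 1 := prob_le_one
      exact_mod_cast ENNReal.toReal_le_of_le_ofReal one_pos.le (by simpa using this)
    have h2 : 0 ≤ F (L - x) := by rw [hF]; exact ENNReal.toReal_nonneg
    linarith
end
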